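/- A functor f : C → D between small categories is fully faithful if and only if the left Kan extension functor f_! : PSh(C) → PSh(D) on presheaf categories is fully faithful. -/

import Mathlib

open CategoryTheory

/-- A functor `f : C ⥤ D` between small categories is fully faithful if and only if the
left Kan extension functor `f_! : PSh(C) ⥤ PSh(D)` on presheaf categories is fully
faithful. -/
theorem stmt_3 {C : Type u} [SmallCategory C] {D : Type u} [SmallCategory D]
    (f : C ⥤ D) :
    (f.Full ∧ f.Faithful) ↔
      ((f.op.lan : (Cᵒᵖ ⥤ Type u) ⥤ (Dᵒᵖ ⥤ Type u)).Full ∧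
        (f.op.lan : (Cᵒᵖ ⥤ Type u) ⥤ (Dᵒᵖ ⥤ Type u)).Faithful) := by
  constructor
  · rintro ⟨hF, hf⟩
    have : IsIso (f.op.lanAdjunction (Type u)).unit := Functor.coreflective' f.op
    have h := (f.op.lanAdjunction (Type u)).fullyFaithfulLOfIsIsoUnit
    exact ⟨h.full, h.faithful⟩
  · rintro ⟨hF, hf⟩
    have e : f ⋙ yoneda ≅ yoneda ⋙ f.op.lan := Functor.isoWhiskerLeft f uliftYonedaIsoYoneda.{u}.symm ≪≫
      Presheaf.compULiftYonedaIsoULiftYonedaCompLan.{u} f ≪≫ Functor.isoWhiskerRight uliftYonedaIsoYoneda.{u} _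
    have h1 : (f ⋙ yoneda).Full := Functor.Full.of_iso e.symm
    have h2 : (f ⋙ yoneda).Faithful := Functor.Faithful.of_iso e.symm
    exact ⟨Functor.Full.of_comp_faithful f yoneda, Functor.Faithful.of_comp f yoneda⟩
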